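/- Strict increase of lower bounds: let g : ℝⁿ → ℝ be strongly convex, 𝒱 ⊆ ℝⁿ finite nonempty, x† the unique minimizer of g(x) + max_{w ∈ 𝒱} ⟨w, x⟩ with active set 𝒜, and let v ∈ ℝⁿ satisfy ⟨v, x†⟩ > max_{w ∈ 𝒱} ⟨w, x†⟩. Then inf_x (g(x) + max_{w ∈ 𝒜 ∪ {v}} ⟨w, x⟩) > inf_x (g(x) + max_{w ∈ 𝒱} ⟨w, x⟩). -/

import Mathlib

open scoped RealInnerProductSpace Classical

set_option maxHeartbeats 1000000

/-- Strict increase of lower bounds: if `x†` minimizes `g x + max_{w ∈ 𝒱} ⟪w, x⟫` with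
`g` strongly convex, `𝒜` is the active set at `x†`, and `v` is a new cut with
`⟪v, x†⟫ > max_{w ∈ 𝒱} ⟪w, x†⟫`, then the optimal value over `𝒜 ∪ {v}` is strictly
larger than the optimal value over `𝒱` (expressed via a strict lower bound `m`). -/
theorem stmt14 {n : ℕ} (g : EuclideanSpace ℝ (Fin n) → ℝ)
    (hsc : ∃ α > (0 : ℝ), ConvexOn ℝ Set.univ (fun x => g x - α / 2 * ‖x‖ ^ 2))
    (V : Finset (EuclideanSpace ℝ (Fin n))) (hV : V.Nonempty)
    (xdag : EuclideanSpace ℝ (Fin n))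
    (hmin : ∀ y, g xdag + V.sup' hV (fun w => ⟪w, xdag⟫) ≤
        g y + V.sup' hV (fun w => ⟪w, y⟫))
    (A : Finset (EuclideanSpace ℝ (Fin n)))
    (hA : A = V.filter (fun w => ⟪w, xdag⟫ = V.sup' hV fun u => ⟪u, xdag⟫))
    (v : EuclideanSpace ℝ (Fin n))
    (hv : V.sup' hV (fun w => ⟪w, xdag⟫) < ⟪v, xdag⟫) :
    ∃ m : ℝ,
      (∀ x, m ≤ g x + (insert v A).sup' (Finset.insert_nonempty v A)
          (fun w => ⟪w, x⟫)) ∧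
      g xdag + V.sup' hV (fun w => ⟪w, xdag⟫) < m := by
  classical
  obtain ⟨α, hα, hc⟩ := hsc
  set S : ℝ := V.sup' hV (fun w => ⟪w, xdag⟫) with hSdef
  obtain ⟨w0, hw0V, hw0⟩ := Finset.exists_mem_eq_sup' hV (fun w => ⟪w, xdag⟫)
  have hw0A : w0 ∈ A := by
    rw [hA, Finset.mem_filter]; exact ⟨hw0V, hw0.symm⟩
  have hAne : A.Nonempty := ⟨w0, hw0A⟩
  have hAsub : A ⊆ V := by rw [hA]; exact Finset.filter_subset _ _
  have hAval : ∀ w ∈ A, ⟪w, xdag⟫ = S := by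
    intro w hw; rw [hA, Finset.mem_filter] at hw; exact hw.2
  have hstrong : StrongConvexOn Set.univ α g := strongConvexOn_iff_convex.2 hc
  have hgconv : ConvexOn ℝ Set.univ g := hstrong.convexOn (fun r => by positivity)
  set fA : EuclideanSpace ℝ (Fin n) → ℝ :=
    fun x => g x + A.sup' hAne (fun w => ⟪w, x⟫) with hfAdef
  have hsupAxdag : A.sup' hAne (fun w => ⟪w, xdag⟫) = S := by
    refine le_antisymm (Finset.sup'_le _ _ fun w hw => (hAval w hw).le) ?_
    rw [← hAval w0 hw0A]; exact Finset.le_sup' (fun w => ⟪w, xdag⟫) hw0A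
  have hfAxdag : fA xdag = g xdag + S := by
    simp only [hfAdef]; rw [hsupAxdag]
  -- sup over A of an affine move
  have hmove : ∀ (t : ℝ), 0 ≤ t → ∀ d : EuclideanSpace ℝ (Fin n),
      A.sup' hAne (fun w => ⟪w, xdag + t • d⟫)
        = S + t * A.sup' hAne (fun w => ⟪w, d⟫) := by
    intro t ht d
    obtain ⟨wM, hwM, hwMval⟩ := Finset.exists_mem_eq_sup' hAne (fun w => ⟪w, d⟫)
    refine le_antisymm (Finset.sup'_le _ _ fun w hw => ?_) ?_
    · rw [inner_add_right, real_inner_smul_right, hAval w hw]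
      have := Finset.le_sup' (fun w => ⟪w, d⟫) hw
      nlinarith
    · have : ⟪wM, xdag + t • d⟫ = S + t * A.sup' hAne (fun w => ⟪w, d⟫) := by
        rw [inner_add_right, real_inner_smul_right, hAval wM hwM, hwMval]
      rw [← this]; exact Finset.le_sup' (fun w => ⟪w, xdag + t • d⟫) hwM
  -- Claim 1: xdag is a global minimizer of fA
  have claim1 : ∀ x, g xdag + S ≤ fA x := by
    intro x
    set d : EuclideanSpace ℝ (Fin n) := x - xdag with hd
    set MA : ℝ := A.sup' hAne (fun w => ⟪w, d⟫) with hMA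
    have hxd : x = xdag + d := by rw [hd]; abel
    have hsupAx : A.sup' hAne (fun w => ⟪w, x⟫) = S + MA := by
      have := hmove 1 zero_le_one d
      simpa [one_smul, ← hxd] using this
    rcases Finset.eq_empty_or_nonempty (V \ A) with hemp | hne
    · -- A = V
      have hVA : V ⊆ A := Finset.sdiff_eq_empty_iff_subset.1 hemp
      have hAV : A = V := Finset.Subset.antisymm hAsub hVA
      have h1 := hmin x
      have h2 : V.sup' hV (fun w => ⟪w, x⟫) = A.sup' hAne (fun w => ⟪w, x⟫) := by
        subst hAV; rfl
      show g xdag + S ≤ g x + A.sup' hAne fun w => ⟪w, x⟫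
      rw [← h2]; exact h1
    · set γ : ℝ := (V \ A).inf' hne (fun w => S - ⟪w, xdag⟫) with hγ
      have hγpos : 0 < γ := by
        rw [hγ, Finset.lt_inf'_iff]
        intro w hw
        rw [Finset.mem_sdiff] at hw
        have hle : ⟪w, xdag⟫ ≤ S := Finset.le_sup' (fun u => ⟪u, xdag⟫) hw.1
        have hneq : ⟪w, xdag⟫ ≠ S := by
          intro h
          exact hw.2 (by rw [hA, Finset.mem_filter]; exact ⟨hw.1, h⟩)
        have := lt_of_le_of_ne hle hneq
        linarith
      set K : ℝ := V.sup' hV (fun w => ⟪w, d⟫ - MA) with hK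
      set K0 : ℝ := max K 0 with hK0
      have hK0nn : 0 ≤ K0 := le_max_right _ _
      set t : ℝ := min 1 (γ / (1 + K0)) with ht
      have ht0 : 0 < t := lt_min one_pos (by positivity)
      have ht1 : t ≤ 1 := min_le_left _ _
      have hkey : ∀ w ∈ V, t * (⟪w, d⟫ - MA) ≤ γ := by
        intro w hw
        rcases le_or_gt (⟪w, d⟫ - MA) 0 with h | h
        · nlinarith
        · have h1 : ⟪w, d⟫ - MA ≤ K := Finset.le_sup' (fun w => ⟪w, d⟫ - MA) hw
          have h2 : ⟪w, d⟫ - MA ≤ 1 + K0 := by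
            have : K ≤ K0 := le_max_left _ _
            linarith
          have h3 : t ≤ γ / (1 + K0) := min_le_right _ _
          have h4 : (0:ℝ) < 1 + K0 := by linarith
          calc t * (⟪w, d⟫ - MA) ≤ (γ / (1 + K0)) * (1 + K0) :=
                mul_le_mul h3 h2 h.le (by positivity)
            _ = γ := div_mul_cancel₀ _ h4.ne'
      set xt : EuclideanSpace ℝ (Fin n) := xdag + t • d with hxt
      have hsupV : V.sup' hV (fun w => ⟪w, xt⟫) ≤ S + t * MA := by
        refine Finset.sup'_le _ _ fun w hw => ?_
        rw [hxt, inner_add_right, real_inner_smul_right]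
        by_cases hwA : w ∈ A
        · rw [hAval w hwA]
          have := Finset.le_sup' (fun w => ⟪w, d⟫) hwA
          nlinarith
        · have hγle : γ ≤ S - ⟪w, xdag⟫ :=
            Finset.inf'_le _ (Finset.mem_sdiff.2 ⟨hw, hwA⟩)
          have := hkey w hw
          nlinarith
      have h1 : g xdag + S ≤ g xt + (S + t * MA) :=
        le_trans (hmin xt) (by linarith [hsupV, hmin xt])
      have hxtcomb : xt = (1 - t) • xdag + t • x := by
        rw [hxt, hd]
        module
      have hconv : g xt ≤ (1 - t) * g xdag + t * g x := by
        have := hgconv.2 (Set.mem_univ xdag) (Set.mem_univ x)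
          (by linarith : (0:ℝ) ≤ 1 - t) ht0.le (by ring)
        rw [← hxtcomb] at this
        simpa [smul_eq_mul] using this
      have hAx := hsupAx
      have hfinal : g xdag + S ≤ (1 - t) * (g xdag + S) + t * fA x := by
        simp only [hfAdef]
        rw [hAx]
        nlinarith
      nlinarith
  -- Claim 2: quadratic growth
  have claim2 : ∀ x, g xdag + S + α / 4 * ‖x - xdag‖ ^ 2 ≤ fA x := by
    intro x
    have hmid := hstrong.2 (Set.mem_univ x) (Set.mem_univ xdag)
      (by norm_num : (0:ℝ) ≤ 1/2) (by norm_num : (0:ℝ) ≤ 1/2) (by norm_num)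
    have hsupmid : A.sup' hAne (fun w => ⟪w, (1/2 : ℝ) • x + (1/2 : ℝ) • xdag⟫)
        ≤ (1/2) * A.sup' hAne (fun w => ⟪w, x⟫)
          + (1/2) * A.sup' hAne (fun w => ⟪w, xdag⟫) := by
      refine Finset.sup'_le _ _ fun w hw => ?_
      rw [inner_add_right, real_inner_smul_right, real_inner_smul_right]
      have h1 := Finset.le_sup' (fun w => ⟪w, x⟫) hw
      have h2 := Finset.le_sup' (fun w => ⟪w, xdag⟫) hw
      nlinarith
    have hlow := claim1 ((1/2 : ℝ) • x + (1/2 : ℝ) • xdag)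
    simp only [hfAdef] at hlow ⊢
    rw [hsupAxdag] at hsupmid
    simp only [smul_eq_mul] at hmid
    nlinarith
  -- Claim 3: continuity of x ↦ g x + ⟪v, x⟫ near xdag
  have hgcont : Continuous g := by
    rw [← continuousOn_univ]
    exact hgconv.continuousOn isOpen_univ
  have hφcont : ContinuousAt (fun x => g x + ⟪v, x⟫) xdag :=
    (hgcont.add (continuous_const.inner continuous_id)).continuousAt
  set ε : ℝ := ⟪v, xdag⟫ - S with hε
  have hεpos : 0 < ε := by rw [hε]; linarith
  have hev : ∀ᶠ x in nhds xdag, g xdag + S + ε / 2 < g x + ⟪v, x⟫ := by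
    refine Filter.Tendsto.eventually_const_lt ?_ hφcont
    rw [hε]; linarith
  obtain ⟨δ, hδpos, hδ⟩ := Metric.eventually_nhds_iff.1 hev
  refine ⟨g xdag + S + min (ε / 2) (α / 4 * δ ^ 2), ?_, ?_⟩
  · intro x
    have hvle : ⟪v, x⟫ ≤ (insert v A).sup' (Finset.insert_nonempty v A) (fun w => ⟪w, x⟫) :=
      Finset.le_sup' (fun w => ⟪w, x⟫) (Finset.mem_insert_self v A)
    have hAle : A.sup' hAne (fun w => ⟪w, x⟫)
        ≤ (insert v A).sup' (Finset.insert_nonempty v A) (fun w => ⟪w, x⟫) :=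
      Finset.sup'_mono _ (Finset.subset_insert _ _) hAne
    by_cases hx : dist x xdag < δ
    · have := hδ hx
      have hm : min (ε / 2) (α / 4 * δ ^ 2) ≤ ε / 2 := min_le_left _ _
      linarith
    · push_neg at hx
      have hnorm : δ ≤ ‖x - xdag‖ := by rwa [dist_eq_norm] at hx
      have h1 := claim2 x
      simp only [hfAdef] at h1
      have h2 : α / 4 * δ ^ 2 ≤ α / 4 * ‖x - xdag‖ ^ 2 := by
        have : δ ^ 2 ≤ ‖x - xdag‖ ^ 2 := by nlinarith [norm_nonneg (x - xdag)]
        nlinarith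
      have hm : min (ε / 2) (α / 4 * δ ^ 2) ≤ α / 4 * δ ^ 2 := min_le_right _ _
      linarith
  · have : 0 < min (ε / 2) (α / 4 * δ ^ 2) := lt_min (by linarith) (by positivity)
    linarith
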